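/- If n and m are both even with 3 ≤ n ≤ m−2, then there exists a red/blue coloring of K_{n+m−2} ⊔ K_{1,n+m−3} (the complete graph on n+m−2 vertices plus an extra vertex joined to n+m−3 of them) containing no red K_{1,n} and no blue K_{1,m}+e. -/

import Mathlib

open SimpleGraph

/-- `Contains G H` : the graph `G` contains a copy of `H`. -/
def Contains {V W : Type*} (G : SimpleGraph V) (H : SimpleGraph W) : Prop :=
  ∃ f : W → V, Function.Injective f ∧ ∀ a b, H.Adj a b → G.Adj (f a) (f b)

/-- The star `K_{1,n}` on `n+1` vertices: vertex `0` is joined to all others. -/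
def starG (n : ℕ) : SimpleGraph (Fin (n + 1)) :=
  SimpleGraph.fromRel (fun a _ => a = 0)

/-- `K_{1,m}+e` on `m+1` vertices: vertex `0` joined to all others, plus the edge `{1,2}`. -/
def starPlusE (m : ℕ) : SimpleGraph (Fin (m + 1)) :=
  SimpleGraph.fromRel (fun a b => a = 0 ∨ (a = 1 ∧ b = 2))

/-- `K_N ⊔ K_{1,k}` : complete graph on the first `N` vertices of `Fin (N+1)`,
with the last vertex joined to exactly the `k` vertices of value `< k`. -/
def KstarK1 (N k : ℕ) : SimpleGraph (Fin (N + 1)) :=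
  SimpleGraph.fromRel (fun a b => (a.val < N ∧ b.val < N) ∨ (a.val = N ∧ b.val < k))

/-- `ArrowsHost Host G H` : every red/blue coloring of the edges of `Host`
contains a red copy of `G` or a blue copy of `H`. -/
def ArrowsHost {V W₁ W₂ : Type*} (Host : SimpleGraph V)
    (G : SimpleGraph W₁) (H : SimpleGraph W₂) : Prop :=
  ∀ R : SimpleGraph V, R ≤ Host → Contains R G ∨ Contains (Host \ R) H

open Fin.NatCast

/-! ### Auxiliary modular-arithmetic lemmas -/

lemma mod_cancel {N v j j' : ℕ} (hj : j < N) (hj' : j' < N)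
    (e : (v + j) % N = (v + j') % N) : j = j' := by
  have h2 : j ≡ j' [MOD N] := Nat.ModEq.add_left_cancel' v e
  simpa [Nat.ModEq, Nat.mod_eq_of_lt hj, Nat.mod_eq_of_lt hj'] using h2

lemma key1 {N v u : ℕ} (hv : v < N) (hu : u < N) :
    (v + (u + N - v) % N) % N = u := by
  rw [Nat.add_mod_mod, show v + (u + N - v) = u + N from by omega,
    Nat.add_mod_right, Nat.mod_eq_of_lt hu]

lemma key2 {N v j : ℕ} (hv : v < N) (hj : j < N) :
    ((v + j) % N + N - v) % N = j := by
  have hlt : (v + j) % N < N := Nat.mod_lt _ (by omega)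
  exact mod_cancel (Nat.mod_lt _ (by omega)) hj (by rw [key1 hv hlt])

lemma key3 {N v j : ℕ} (hv : v < N) (hj1 : 1 ≤ j) (hj : j < N) :
    (v + N - (v + j) % N) % N = N - j := by
  have hu : (v + j) % N < N := Nat.mod_lt _ (by omega)
  have h1 : ((v + j) % N + (v + N - (v + j) % N) % N) % N = v := key1 hu hv
  have h2 : ((v + j) % N + (N - j)) % N = v := by
    rw [Nat.mod_add_mod, show v + j + (N - j) = v + N from by omega,
      Nat.add_mod_right, Nat.mod_eq_of_lt hv]
  exact mod_cancel (Nat.mod_lt _ (by omega)) (by omega) (by rw [h1, h2])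

lemma key4 {N u v d : ℕ} (hu : u < N) (hd : d ≤ N) (hkey : (u + d) % N = v) :
    (v + (N - d)) % N = u := by
  rw [← hkey, Nat.mod_add_mod, show u + d + (N - d) = u + N from by omega,
    Nat.add_mod_right, Nat.mod_eq_of_lt hu]

lemma mod_ne {N v j : ℕ} (hv : v < N) (hj1 : 1 ≤ j) (hj : j < N) :
    (v + j) % N ≠ v := by
  intro e
  have h0 : (v + j) % N = (v + 0) % N := by
    simpa [Nat.mod_eq_of_lt hv] using e
  have := mod_cancel hj (show 0 < N by omega) h0
  omega

lemma mod2 {x N : ℕ} (h1 : N ≤ x) (h2 : x < 2*N) : x % N = x - N := by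
  rw [Nat.mod_eq_sub_mod h1, Nat.mod_eq_of_lt (by omega)]

lemma val_cast_le {N x : ℕ} (hx : x ≤ N) : ((x : ℕ) : Fin (N+1)).val = x :=
  Fin.val_cast_of_lt (by omega)

/-! ### The generic "no star with many leaves" bound -/

lemma star_bound {V : Type*} [DecidableEq V] {G : SimpleGraph V} {n : ℕ}
    {H : SimpleGraph (Fin (n+1))} (hH : ∀ b : Fin (n+1), b ≠ 0 → H.Adj 0 b)
    (T : V → Finset V) (hT : ∀ v u, G.Adj v u → u ∈ T v)
    (hcard : ∀ v, (T v).card < n) : ¬ Contains G H := by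
  rintro ⟨f, hinj, hadj⟩
  have hmem : ∀ i : Fin n, f i.succ ∈ T (f 0) := fun i =>
    hT _ _ (hadj 0 i.succ (hH _ (Fin.succ_ne_zero i)))
  have hsub : Finset.univ.image (fun i : Fin n => f i.succ) ⊆ T (f 0) := by
    intro u hu
    obtain ⟨i, _, rfl⟩ := Finset.mem_image.mp hu
    exact hmem i
  have hle : n ≤ (T (f 0)).card := by
    calc n = (Finset.univ.image (fun i : Fin n => f i.succ)).card := by
          rw [Finset.card_image_of_injective _
              (show Function.Injective (fun i : Fin n => f i.succ) from
                fun a b e => Fin.succ_injective n (hinj e)),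
            Finset.card_univ, Fintype.card_fin]
      _ ≤ _ := Finset.card_le_card hsub
  exact absurd hle (by have := hcard (f 0); omega)

lemma starG_adj (n : ℕ) (b : Fin (n+1)) (hb : b ≠ 0) : (starG n).Adj 0 b := by
  rw [starG, fromRel_adj]
  exact ⟨Ne.symm hb, Or.inl rfl⟩

lemma starPlusE_adj (m : ℕ) (b : Fin (m+1)) (hb : b ≠ 0) : (starPlusE m).Adj 0 b := by
  rw [starPlusE, fromRel_adj]
  exact ⟨Ne.symm hb, Or.inl (Or.inl rfl)⟩

/-! ### The red graph and explicit neighbourhoods -/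

def redRel (N h p : ℕ) (a b : ℕ) : Prop :=
  (a < N ∧ b < N ∧ 1 ≤ (b + N - a) % N ∧ (b + N - a) % N ≤ h) ∨
  (2*h ≤ a ∧ a < 2*h + p ∧ b = a + p) ∨
  (a = N ∧ b < 2*h)

def RedG (N h p : ℕ) : SimpleGraph (Fin (N+1)) :=
  SimpleGraph.fromRel fun a b => redRel N h p a.val b.val

def Fv (N v j : ℕ) : Fin (N+1) := ((if j = N then N else (v + j) % N : ℕ) : Fin (N+1))

def Dv (N h p v : ℕ) : Finset ℕ :=
  (Finset.Icc 1 h ∪ Finset.Icc (N - h) (N - 1)) ∪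
    {if v < 2*h then N else if v < 2*h + p then p else N - p}

def Tred (N h p : ℕ) (v : Fin (N+1)) : Finset (Fin (N+1)) :=
  if v.val = N then (Finset.range (2*h)).image (fun t => ((t : ℕ) : Fin (N+1)))
  else (Dv N h p v.val).image (Fv N v.val)

def Thost (N : ℕ) (v : Fin (N+1)) : Finset (Fin (N+1)) :=
  if v.val = N then (Finset.range (N-1)).image (fun t => ((t : ℕ) : Fin (N+1)))
  else if v.val = N - 1 then (Finset.univ.erase v).erase ((N : ℕ) : Fin (N+1))
  else Finset.univ.erase v

lemma le_host {N h p : ℕ} (hh : 1 ≤ h) (hp : h + 2 ≤ p) (hN : N = 2*h+2*p) :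
    RedG N h p ≤ KstarK1 N (N-1) := by
  intro a b hab
  rw [RedG, fromRel_adj] at hab
  rw [KstarK1, fromRel_adj]
  obtain ⟨hne, hor⟩ := hab
  refine ⟨hne, ?_⟩
  have ha := a.isLt
  have hb := b.isLt
  rcases hor with hr | hr <;>
    rcases hr with ⟨h1, h2, _⟩ | ⟨h1, h2, h3⟩ | ⟨h1, h2⟩
  · exact Or.inl (Or.inl ⟨h1, h2⟩)
  · exact Or.inl (Or.inl ⟨by omega, by omega⟩)
  · exact Or.inl (Or.inr ⟨h1, by omega⟩)
  · exact Or.inl (Or.inl ⟨h2, h1⟩)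
  · exact Or.inl (Or.inl ⟨by omega, by omega⟩)
  · exact Or.inr (Or.inr ⟨h1, by omega⟩)

lemma tred_adj {N h p : ℕ} (hh : 1 ≤ h) (hp : h + 2 ≤ p) (hN : N = 2*h+2*p)
    (v u : Fin (N+1)) (hu : u ∈ Tred N h p v) : (RedG N h p).Adj v u := by
  have hNpos : 0 < N := by omega
  rw [RedG, fromRel_adj]
  simp only [redRel]
  rw [Tred] at hu
  by_cases hv : v.val = N
  · rw [if_pos hv] at hu
    obtain ⟨t, ht, rfl⟩ := Finset.mem_image.mp hu
    rw [Finset.mem_range] at ht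
    have hval : ((t:ℕ) : Fin (N+1)).val = t := val_cast_le (by omega)
    constructor
    · intro e
      rw [e, hval] at hv
      omega
    · exact Or.inl (Or.inr (Or.inr ⟨hv, by rw [hval]; omega⟩))
  · rw [if_neg hv] at hu
    have hvN : v.val < N := by have := v.isLt; omega
    obtain ⟨j, hj, rfl⟩ := Finset.mem_image.mp hu
    simp only [Dv, Finset.mem_union, Finset.mem_Icc, Finset.mem_singleton] at hj
    rcases hj with (⟨hj1, hj2⟩ | ⟨hj1, hj2⟩) | hj
    · -- j ∈ [1, h]
      have hjN : j < N := by omega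
      have hFval : (Fv N v.val j).val = (v.val + j) % N := by
        rw [Fv, if_neg (by omega)]
        exact val_cast_le (le_of_lt (Nat.mod_lt _ hNpos))
      constructor
      · intro e
        have hb : (v.val + j) % N = v.val := by rw [← hFval, ← e]
        exact mod_ne hvN hj1 hjN hb
      · refine Or.inl (Or.inl ⟨hvN, by rw [hFval]; exact Nat.mod_lt _ hNpos, ?_, ?_⟩) <;>
          · rw [hFval, key2 hvN hjN]; omega
    · -- j ∈ [N-h, N-1]
      have hj1' : 1 ≤ j := by omega
      have hjN : j < N := by omega
      have hFval : (Fv N v.val j).val = (v.val + j) % N := by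
        rw [Fv, if_neg (by omega)]
        exact val_cast_le (le_of_lt (Nat.mod_lt _ hNpos))
      constructor
      · intro e
        have hb : (v.val + j) % N = v.val := by rw [← hFval, ← e]
        exact mod_ne hvN hj1' hjN hb
      · refine Or.inr (Or.inl ⟨by rw [hFval]; exact Nat.mod_lt _ hNpos, hvN, ?_, ?_⟩) <;>
          · rw [hFval, key3 hvN hj1' hjN]; omega
    · -- the special element
      subst hj
      split_ifs with h1 h2
      · -- v < 2h : extra vertex N
        have hFval : (Fv N v.val N).val = N := by
          rw [Fv, if_pos rfl]; exact val_cast_le le_rfl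
        constructor
        · intro e
          rw [e, hFval] at hv
          exact hv rfl
        · exact Or.inr (Or.inr (Or.inr ⟨hFval, h1⟩))
      · -- 2h ≤ v < 2h+p : partner v+p
        have hFval : (Fv N v.val p).val = v.val + p := by
          rw [Fv, if_neg (by omega)]
          rw [Nat.mod_eq_of_lt (by omega)]
          exact val_cast_le (by omega)
        constructor
        · intro e
          have := congrArg Fin.val e
          rw [hFval] at this
          omega
        · exact Or.inl (Or.inr (Or.inl ⟨by omega, h2, by rw [hFval]⟩))
      · -- v ≥ 2h+p : partner v-p
        have hFval : (Fv N v.val (N - p)).val = v.val - p := by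
          rw [Fv, if_neg (by omega)]
          rw [mod2 (by omega) (by omega)]
          rw [val_cast_le (by omega)]
          omega
        constructor
        · intro e
          have := congrArg Fin.val e
          rw [hFval] at this
          omega
        · exact Or.inr (Or.inr (Or.inl ⟨by rw [hFval]; omega, by rw [hFval]; omega,
            by rw [hFval]; omega⟩))

lemma adj_tred {N h p : ℕ} (hh : 1 ≤ h) (hp : h + 2 ≤ p) (hN : N = 2*h+2*p)
    (v u : Fin (N+1)) (hadj : (RedG N h p).Adj v u) : u ∈ Tred N h p v := by
  have hNpos : 0 < N := by omega
  rw [RedG, fromRel_adj] at hadj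
  simp only [redRel] at hadj
  obtain ⟨hne, hor⟩ := hadj
  rw [Tred]
  by_cases hv : v.val = N
  · rw [if_pos hv]
    have hu2h : u.val < 2*h := by
      rcases hor with (⟨hA, _, _⟩ | ⟨_, hA, _⟩ | ⟨_, hA⟩) | (⟨_, hA, _⟩ | ⟨_, hA, hB⟩ | ⟨hA, hB⟩)
      · omega
      · omega
      · exact hA
      · omega
      · omega
      · exact absurd (Fin.ext (hv.trans hA.symm) : v = u) hne
    exact Finset.mem_image.mpr ⟨u.val, Finset.mem_range.mpr hu2h, Fin.cast_val_eq_self u⟩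
  · rw [if_neg hv]
    have hvN : v.val < N := by have := v.isLt; omega
    refine Finset.mem_image.mpr ?_
    rcases hor with (⟨_, huN, hd1, hd2⟩ | ⟨hv2h, hvlt, hup⟩ | ⟨hA, _⟩) |
        (⟨huN, _, hd1, hd2⟩ | ⟨hu2h, hult, hvp⟩ | ⟨huN, hv2h⟩)
    · -- circ v u
      refine ⟨(u.val + N - v.val) % N, ?_, ?_⟩
      · simp only [Dv, Finset.mem_union, Finset.mem_Icc, Finset.mem_singleton]
        exact Or.inl (Or.inl ⟨hd1, hd2⟩)
      · refine Fin.ext ?_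
        rw [Fv, if_neg (by omega), val_cast_le (le_of_lt (Nat.mod_lt _ hNpos)),
          key1 hvN huN]
    · -- matching v u
      refine ⟨p, ?_, ?_⟩
      · simp only [Dv, Finset.mem_union, Finset.mem_Icc, Finset.mem_singleton]
        refine Or.inr ?_
        rw [if_neg (by omega), if_pos hvlt]
      · refine Fin.ext ?_
        rw [Fv, if_neg (by omega), Nat.mod_eq_of_lt (by omega),
          val_cast_le (by omega), hup]
    · omega
    · -- circ u v
      refine ⟨N - (v.val + N - u.val) % N, ?_, ?_⟩
      · simp only [Dv, Finset.mem_union, Finset.mem_Icc, Finset.mem_singleton]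
        exact Or.inl (Or.inr ⟨by omega, by omega⟩)
      · refine Fin.ext ?_
        rw [Fv, if_neg (by omega), val_cast_le (le_of_lt (Nat.mod_lt _ hNpos)),
          key4 huN (by omega) (key1 huN hvN)]
    · -- matching u v
      refine ⟨N - p, ?_, ?_⟩
      · simp only [Dv, Finset.mem_union, Finset.mem_Icc, Finset.mem_singleton]
        refine Or.inr ?_
        rw [if_neg (by omega), if_neg (by omega)]
      · refine Fin.ext ?_
        rw [Fv, if_neg (by omega), mod2 (by omega) (by omega),
          val_cast_le (by omega)]
        omega
    · -- star u v
      refine ⟨N, ?_, ?_⟩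
      · simp only [Dv, Finset.mem_union, Finset.mem_Icc, Finset.mem_singleton]
        exact Or.inr (if_pos hv2h).symm
      · refine Fin.ext ?_
        rw [Fv, if_pos rfl, val_cast_le le_rfl, huN]

lemma Dv_bounds {N h p v j : ℕ} (hh : 1 ≤ h) (hp : h + 2 ≤ p) (hN : N = 2*h+2*p)
    (hj : j ∈ Dv N h p v) : 1 ≤ j ∧ j ≤ N := by
  simp only [Dv, Finset.mem_union, Finset.mem_Icc, Finset.mem_singleton] at hj
  rcases hj with (⟨a, b⟩ | ⟨a, b⟩) | hj
  · omega
  · omega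
  · split_ifs at hj <;> omega

lemma card_Dv {N h p v : ℕ} (hh : 1 ≤ h) (hp : h + 2 ≤ p) (hN : N = 2*h+2*p) :
    (Dv N h p v).card = 2*h+1 := by
  have d1 : Disjoint (Finset.Icc 1 h) (Finset.Icc (N-h) (N-1)) := by
    rw [Finset.disjoint_left]
    intro a ha hb
    rw [Finset.mem_Icc] at ha hb
    omega
  have d2 : Disjoint (Finset.Icc 1 h ∪ Finset.Icc (N-h) (N-1))
      ({if v < 2*h then N else if v < 2*h+p then p else N-p} : Finset ℕ) := by
    rw [Finset.disjoint_right]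
    intro a ha hb
    rw [Finset.mem_singleton] at ha
    rw [Finset.mem_union, Finset.mem_Icc, Finset.mem_Icc] at hb
    split_ifs at ha <;> omega
  rw [Dv, Finset.card_union_of_disjoint d2, Finset.card_union_of_disjoint d1,
    Nat.card_Icc, Nat.card_Icc, Finset.card_singleton]
  omega

lemma card_Tred {N h p : ℕ} (hh : 1 ≤ h) (hp : h + 2 ≤ p) (hN : N = 2*h+2*p)
    (v : Fin (N+1)) :
    (Tred N h p v).card = if v.val = N then 2*h else 2*h+1 := by
  rw [Tred]
  split_ifs with hv
  · rw [Finset.card_image_of_injOn, Finset.card_range]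
    intro a ha b hb e
    rw [Finset.mem_coe, Finset.mem_range] at ha hb
    have := congrArg Fin.val e
    rwa [val_cast_le (by omega), val_cast_le (by omega)] at this
  · rw [Finset.card_image_of_injOn, card_Dv hh hp hN]
    intro a ha b hb e
    rw [Finset.mem_coe] at ha hb
    obtain ⟨ha1, ha2⟩ := Dv_bounds hh hp hN ha
    obtain ⟨hb1, hb2⟩ := Dv_bounds hh hp hN hb
    have hNpos : 0 < N := by omega
    have hval := congrArg Fin.val e
    by_cases haN : a = N <;> by_cases hbN : b = N
    · omega
    · rw [Fv, Fv, if_pos haN, if_neg hbN, val_cast_le le_rfl,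
        val_cast_le (le_of_lt (Nat.mod_lt _ hNpos))] at hval
      have := Nat.mod_lt (v.val + b) hNpos
      omega
    · rw [Fv, Fv, if_neg haN, if_pos hbN, val_cast_le le_rfl,
        val_cast_le (le_of_lt (Nat.mod_lt _ hNpos))] at hval
      have := Nat.mod_lt (v.val + a) hNpos
      omega
    · rw [Fv, Fv, if_neg haN, if_neg hbN,
        val_cast_le (le_of_lt (Nat.mod_lt _ hNpos)),
        val_cast_le (le_of_lt (Nat.mod_lt _ hNpos))] at hval
      exact mod_cancel (by omega) (by omega) hval

lemma host_adj_thost {N : ℕ} (_hN2 : 2 ≤ N) (v u : Fin (N+1))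
    (hadj : (KstarK1 N (N-1)).Adj v u) : u ∈ Thost N v := by
  rw [KstarK1, fromRel_adj] at hadj
  obtain ⟨hne, hor⟩ := hadj
  rw [Thost]
  split_ifs with hv hv1
  · have hu : u.val < N - 1 := by
      rcases hor with (⟨hA, hB⟩ | ⟨hA, hB⟩) | (⟨hA, hB⟩ | ⟨hA, hB⟩)
      · omega
      · exact hB
      · omega
      · exact absurd (Fin.ext (hv.trans hA.symm) : v = u) hne
    exact Finset.mem_image.mpr ⟨u.val, Finset.mem_range.mpr hu, Fin.cast_val_eq_self u⟩
  · rw [Finset.mem_erase, Finset.mem_erase]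
    have huN : u.val ≠ N := by
      rcases hor with (⟨hA, hB⟩ | ⟨hA, hB⟩) | (⟨hA, hB⟩ | ⟨hA, hB⟩)
      · omega
      · omega
      · omega
      · omega
    refine ⟨?_, Ne.symm hne, Finset.mem_univ _⟩
    intro e
    have := congrArg Fin.val e
    rw [val_cast_le le_rfl] at this
    exact huN this
  · exact Finset.mem_erase.mpr ⟨Ne.symm hne, Finset.mem_univ _⟩

lemma card_Thost {N : ℕ} (hN2 : 2 ≤ N) (v : Fin (N+1)) :
    (Thost N v).card = if v.val = N then N-1 else if v.val = N-1 then N-1 else N := by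
  rw [Thost]
  split_ifs with hv hv1
  · rw [Finset.card_image_of_injOn, Finset.card_range]
    intro a ha b hb e
    rw [Finset.mem_coe, Finset.mem_range] at ha hb
    have := congrArg Fin.val e
    rwa [val_cast_le (by omega), val_cast_le (by omega)] at this
  · have hmem : ((N : ℕ) : Fin (N+1)) ∈ Finset.univ.erase v := by
      refine Finset.mem_erase.mpr ⟨?_, Finset.mem_univ _⟩
      intro e
      have := congrArg Fin.val e
      rw [val_cast_le le_rfl] at this
      omega
    rw [Finset.card_erase_of_mem hmem, Finset.card_erase_of_mem (Finset.mem_univ v),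
      Finset.card_univ, Fintype.card_fin]
    omega
  · rw [Finset.card_erase_of_mem (Finset.mem_univ v), Finset.card_univ, Fintype.card_fin]
    omega

lemma core (h p N : ℕ) (hh : 1 ≤ h) (hp : h + 2 ≤ p) (hN : N = 2*h+2*p) :
    ∃ R : SimpleGraph (Fin (N+1)), R ≤ KstarK1 N (N-1) ∧
      ¬ Contains R (starG (2*h+2)) ∧
      ¬ Contains (KstarK1 N (N-1) \ R) (starPlusE (2*p)) := by
  have hN2 : 2 ≤ N := by omega
  refine ⟨RedG N h p, le_host hh hp hN, ?_, ?_⟩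
  · refine star_bound (starG_adj (2*h+2)) (Tred N h p) (adj_tred hh hp hN) ?_
    intro v
    rw [card_Tred hh hp hN]
    split_ifs <;> omega
  · refine star_bound (starPlusE_adj (2*p)) (fun v => Thost N v \ Tred N h p v) ?_ ?_
    · intro v u hadj
      rw [SimpleGraph.sdiff_adj] at hadj
      obtain ⟨hH, hR⟩ := hadj
      exact Finset.mem_sdiff.mpr ⟨host_adj_thost hN2 v u hH,
        fun hmem => hR (tred_adj hh hp hN v u hmem)⟩
    · intro v
      have hsub : Tred N h p v ⊆ Thost N v := fun u hu =>
        host_adj_thost hN2 v u (le_host hh hp hN (tred_adj hh hp hN v u hu))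
      rw [Finset.card_sdiff_of_subset hsub, card_Thost hN2, card_Tred hh hp hN]
      split_ifs <;> omega

theorem stmt_13 (n m : ℕ) (hne : Even n) (hme : Even m) (hn : 3 ≤ n) (hnm : n + 2 ≤ m) :
    ∃ R : SimpleGraph (Fin (n + m - 2 + 1)), R ≤ KstarK1 (n + m - 2) (n + m - 3) ∧
      ¬ Contains R (starG n) ∧
      ¬ Contains (KstarK1 (n + m - 2) (n + m - 3) \ R) (starPlusE m) := by
  obtain ⟨r, rfl⟩ := hne
  obtain ⟨s, rfl⟩ := hme
  rw [show r + r + (s + s) - 3 = r + r + (s + s) - 2 - 1 from by omega]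
  rw [show r + r = 2*(r-1)+2 from by omega]
  rw [show s + s = 2*s from by omega]
  exact core (r-1) s (2*(r-1)+2+(2*s)-2) (by omega) (by omega) (by omega)
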